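/- For q ∈ (0,1), integer m ≥ 1, and ε ∈ (0,1), with S(ε) = (1−ε)^(m/(m+1))·(m+1)·q^(1/(m+1))·m^(−m/(m+1))·ε^(1/(m+1)), the function u^{ε,1}(x,t) (the lsc viscosity/Hopf-Lax solution with initial data ε·1{x≤0} + 1{x>0}) satisfies: u^{ε,1}(x+S(ε), 1+ε) → u(x,1) uniformly in x as ε → 0, where u(x,1) is 0 for x ≤ 0, (m/(q^(1/m)(m+1)^((m+1)/m)))·x^((m+1)/m) for 0 ≤ x ≤ (m+1)(q/m^m)^(1/(m+1)), and 1 otherwise. -/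

import Mathlib

open Real Filter

lemma rpow_sub_rpow_le_aux {p M : ℝ} (hp : 1 ≤ p) {a b : ℝ} (ha : 0 ≤ a)
    (hab : a ≤ b) (hbM : b ≤ M) : b ^ p - a ^ p ≤ p * M ^ (p - 1) * (b - a) := by
  have hb : 0 ≤ b := ha.trans hab
  have hM : 0 ≤ M := hb.trans hbM
  have key : ‖b ^ p - a ^ p‖ ≤ p * M ^ (p - 1) * ‖b - a‖ := by
    apply Convex.norm_image_sub_le_of_norm_hasDerivWithin_le
      (f := fun x : ℝ => x ^ p) (f' := fun x : ℝ => p * x ^ (p - 1))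
      (s := Set.Icc 0 M)
    · intro x hx
      exact (Real.hasDerivAt_rpow_const (Or.inr hp)).hasDerivWithinAt
    · intro x hx
      rw [Real.norm_eq_abs, abs_of_nonneg (mul_nonneg (by linarith) (Real.rpow_nonneg hx.1 _))]
      have : x ^ (p - 1) ≤ M ^ (p - 1) :=
        Real.rpow_le_rpow hx.1 hx.2 (by linarith)
      nlinarith [hp]
    · exact convex_Icc 0 M
    · exact ⟨ha, hab.trans hbM⟩
    · exact ⟨hb, hbM⟩
  calc b ^ p - a ^ p ≤ ‖b ^ p - a ^ p‖ := le_abs_self _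
    _ ≤ p * M ^ (p - 1) * ‖b - a‖ := key
    _ = p * M ^ (p - 1) * (b - a) := by rw [Real.norm_eq_abs, abs_of_nonneg (by linarith)]

set_option maxHeartbeats 2000000 in
theorem stmt17 (q : ℝ) (hq0 : 0 < q) (hq1 : q < 1) (m : ℕ) (hm : 1 ≤ m)
    (S : ℝ → ℝ)
    (hS : ∀ ε : ℝ, S ε = (1 - ε) ^ ((m : ℝ) / (m + 1)) * ((m : ℝ) + 1) * q ^ ((1 : ℝ) / (m + 1)) *
      (m : ℝ) ^ (-(m : ℝ) / (m + 1)) * ε ^ ((1 : ℝ) / (m + 1)))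
    (uε : ℝ → ℝ → ℝ → ℝ)
    (huε : ∀ ε x t, uε ε x t = if x ≤ 0 then ε
      else if x ≤ S ε * (t / ε) ^ ((1 : ℝ) / (m + 1)) then
        ε + ((m : ℝ) / (q ^ ((1 : ℝ) / m) * ((m : ℝ) + 1) ^ (((m : ℝ) + 1) / m))) *
          (x ^ (m + 1) / t) ^ ((1 : ℝ) / m)
      else 1)
    (u1 : ℝ → ℝ)
    (hu1 : ∀ x, u1 x = if x ≤ 0 then 0
      else if x ≤ ((m : ℝ) + 1) * (q / (m : ℝ) ^ m) ^ ((1 : ℝ) / (m + 1)) then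
        ((m : ℝ) / (q ^ ((1 : ℝ) / m) * ((m : ℝ) + 1) ^ (((m : ℝ) + 1) / m))) * x ^ (((m : ℝ) + 1) / m)
      else 1) :
    TendstoUniformly (fun ε x => uε ε (x + S ε) (1 + ε)) u1 (nhdsWithin 0 (Set.Ioo 0 1)) := by
  have hm0 : (0:ℝ) < (m:ℝ) := by exact_mod_cast Nat.pos_of_ne_zero (by omega)
  set mR : ℝ := (m:ℝ) with hmRdef
  have hm1R : (1:ℝ) ≤ mR := by rw [hmRdef]; exact_mod_cast hm
  have hmne : mR ≠ 0 := ne_of_gt hm0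
  have hm1ne : mR + 1 ≠ 0 := by positivity
  set p : ℝ := (mR + 1) / mR with hpdef
  have hp1 : 1 ≤ p := by
    rw [hpdef, le_div_iff₀ hm0]; linarith
  have hppos : 0 < p := lt_of_lt_of_le one_pos hp1
  set c : ℝ := mR / (q ^ ((1:ℝ)/mR) * (mR + 1) ^ p) with hcdef
  have hc : 0 < c := by
    rw [hcdef]; positivity
  set x₀ : ℝ := (mR + 1) * (q / mR ^ m) ^ ((1:ℝ)/(mR + 1)) with hx₀def
  have hx₀ : 0 < x₀ := by rw [hx₀def]; positivity
  have hmm : ∀ e : ℝ, ((mR ^ m : ℝ)) ^ e = mR ^ (mR * e) := by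
    intro e
    rw [← Real.rpow_natCast mR m, ← Real.rpow_mul hm0.le, hmRdef]
  have hx₀' : x₀ = (mR + 1) * q ^ ((1:ℝ)/(mR+1)) * mR ^ (-(mR/(mR+1))) := by
    rw [hx₀def, Real.div_rpow hq0.le (by positivity), hmm, Real.rpow_neg hm0.le,
      div_eq_mul_inv, mul_assoc]
    congr 3
    ring
  have hcx : c * x₀ ^ p = 1 := by
    have h1 : x₀ ^ p = (mR + 1) ^ p * (q ^ ((1:ℝ)/(mR+1))) ^ p * (mR ^ (-(mR/(mR+1)))) ^ p := by
      rw [hx₀', Real.mul_rpow (by positivity) (by positivity),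
        Real.mul_rpow (by positivity) (by positivity)]
    have h2 : (q ^ ((1:ℝ)/(mR+1))) ^ p = q ^ ((1:ℝ)/mR) := by
      rw [← Real.rpow_mul hq0.le]
      congr 1
      rw [hpdef]
      field_simp
      try ring
    have h3 : (mR ^ (-(mR/(mR+1)))) ^ p = mR⁻¹ := by
      rw [← Real.rpow_mul hm0.le]
      rw [show -(mR/(mR+1)) * p = -1 by rw [hpdef]; field_simp]
      rw [Real.rpow_neg_one]
    rw [h1, h2, h3, hcdef]
    field_simp
  clear_value c x₀
  -- the profile function
  set g : ℝ → ℝ := fun y => c * (max y 0) ^ p with hgdef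
  have hgnonneg : ∀ y, 0 ≤ g y := by
    intro y
    exact mul_nonneg hc.le (Real.rpow_nonneg (le_max_right _ _) _)
  have hgmono : Monotone g := by
    intro a b hab
    exact mul_le_mul_of_nonneg_left
      (Real.rpow_le_rpow (le_max_right _ _) (max_le_max hab le_rfl) hppos.le) hc.le
  have hgx₀ : g x₀ = 1 := by
    rw [hgdef]
    simp only [max_eq_left hx₀.le]
    exact hcx
  have hgpos : ∀ y, 0 < y → g y = c * y ^ p := by
    intro y hy
    rw [hgdef]
    simp only [max_eq_left hy.le]
  clear_value g
  -- u1 as a min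
  have hu1min : ∀ x, u1 x = min (g x) 1 := by
    intro x
    rw [hu1 x]
    split_ifs with h1 h2
    · have : g x = 0 := by
        rw [hgdef]; simp only [max_eq_right h1, Real.zero_rpow (ne_of_gt hppos), mul_zero]
      rw [this]
      simp
    · push_neg at h1
      rw [hgpos x h1]
      rw [min_eq_left]
      calc c * x ^ p = g x := (hgpos x h1).symm
        _ ≤ g x₀ := hgmono h2
        _ = 1 := hgx₀
    · push_neg at h1 h2
      rw [min_eq_right]
      calc (1:ℝ) = g x₀ := hgx₀.symm
        _ ≤ g x := hgmono h2.le
  -- nonnegativity of S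
  have hSnn : ∀ ε : ℝ, 0 < ε → ε < 1 → 0 ≤ S ε := by
    intro ε hε0 hε1
    rw [hS ε]
    have h1 : (0:ℝ) ≤ 1 - ε := by linarith
    positivity
  -- the main pointwise identity and bound
  set L : ℝ := c * (p * (x₀ + 1) ^ (p - 1)) with hLdef
  have hLnn : 0 ≤ L := by
    rw [hLdef]
    have h1 : (0:ℝ) ≤ (x₀ + 1) ^ (p - 1) := Real.rpow_nonneg (by linarith) _
    exact mul_nonneg hc.le (mul_nonneg hppos.le h1)
  clear_value L
  have key : ∀ ε : ℝ, 0 < ε → ε < 1 → S ε ≤ 1 →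
      ∀ x, |u1 x - uε ε (x + S ε) (1 + ε)| ≤ ε + L * S ε := by
    intro ε hε0 hε1 hSle x
    have hε1' : (0:ℝ) < 1 + ε := by linarith
    have h1ε : (0:ℝ) < 1 - ε := by linarith
    have hSnn' : 0 ≤ S ε := hSnn ε hε0 hε1
    set lam : ℝ := (1 + ε) ^ (-((1:ℝ)/mR)) with hlamdef
    have hlampos : 0 < lam := Real.rpow_pos_of_pos hε1' _
    have hlamle1 : lam ≤ 1 :=
      Real.rpow_le_one_of_one_le_of_nonpos (by linarith)
        (neg_nonpos.mpr (by positivity))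
    have hA : (0:ℝ) < (1 + ε) ^ ((1:ℝ)/mR) := Real.rpow_pos_of_pos hε1' _
    have hA2 : (1 + ε) ^ ((1:ℝ)/mR) ≤ 1 + ε := by
      calc (1 + ε) ^ ((1:ℝ)/mR) ≤ (1 + ε) ^ (1:ℝ) :=
            Real.rpow_le_rpow_of_exponent_le (by linarith)
              (by rw [div_le_one hm0]; exact hm1R)
        _ = 1 + ε := Real.rpow_one _
    have hlameq : lam = ((1 + ε) ^ ((1:ℝ)/mR))⁻¹ := by
      rw [hlamdef, Real.rpow_neg hε1'.le]
    clear_value lam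
    have hlamge : 1 - ε ≤ lam := by
      rw [hlameq]
      have h2 : (1 + ε)⁻¹ ≤ ((1 + ε) ^ ((1:ℝ)/mR))⁻¹ :=
        inv_anti₀ hA hA2
      have h3 : 1 - ε ≤ (1 + ε)⁻¹ := by
        nlinarith [mul_inv_cancel₀ (ne_of_gt hε1'), inv_pos.mpr hε1']
      linarith
    -- the threshold point
    set Y : ℝ := x₀ * ((1 - ε) ^ (mR/(mR+1)) * (1 + ε) ^ ((1:ℝ)/(mR+1))) with hYdef
    have hYpos : 0 < Y := by
      rw [hYdef]
      exact mul_pos hx₀ (mul_pos (Real.rpow_pos_of_pos h1ε _) (Real.rpow_pos_of_pos hε1' _))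
    clear_value Y
    have hT : S ε * ((1 + ε) / ε) ^ ((1:ℝ)/(mR+1)) = Y := by
      have hεe : (0:ℝ) < ε ^ ((1:ℝ)/(mR+1)) := Real.rpow_pos_of_pos hε0 _
      rw [hS ε, Real.div_rpow hε1'.le hε0.le, hYdef, hx₀', neg_div]
      field_simp
    have hgY : lam * g Y = 1 - ε := by
      have h1 : g Y = c * x₀ ^ p * ((1 - ε) * (1 + ε) ^ ((1:ℝ)/mR)) := by
        rw [hgpos Y hYpos, hYdef,
          Real.mul_rpow hx₀.le (mul_nonneg (Real.rpow_nonneg h1ε.le _) (Real.rpow_nonneg hε1'.le _)),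
          Real.mul_rpow (Real.rpow_nonneg h1ε.le _) (Real.rpow_nonneg hε1'.le _),
          ← Real.rpow_mul h1ε.le, ← Real.rpow_mul hε1'.le,
          show mR/(mR+1) * p = 1 by rw [hpdef]; field_simp; try ring,
          show (1:ℝ)/(mR+1) * p = 1/mR by rw [hpdef]; field_simp; try ring,
          Real.rpow_one]
        ring
      rw [h1, hcx, hlamdef]
      have h2 : (1 + ε) ^ (-((1:ℝ)/mR)) * (1 + ε) ^ ((1:ℝ)/mR) = 1 := by
        rw [← Real.rpow_add hε1', neg_add_cancel, Real.rpow_zero]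
      calc (1 + ε) ^ (-((1:ℝ)/mR)) * (1 * ((1 - ε) * (1 + ε) ^ ((1:ℝ)/mR)))
          = (1 - ε) * ((1 + ε) ^ (-((1:ℝ)/mR)) * (1 + ε) ^ ((1:ℝ)/mR)) := by ring
        _ = 1 - ε := by rw [h2, mul_one]
    -- uε as a min
    have hueq : ∀ y, uε ε y (1 + ε) = min (ε + lam * g y) 1 := by
      intro y
      rw [huε ε y (1 + ε)]
      split_ifs with h1 h2
      · have hgy : g y = 0 := by
          rw [hgdef]
          simp only [max_eq_right h1, Real.zero_rpow (ne_of_gt hppos), mul_zero]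
        rw [hgy, mul_zero, add_zero, min_eq_left (by linarith)]
      · push_neg at h1
        rw [hT] at h2
        have hval : (y ^ (m+1) / (1 + ε)) ^ ((1:ℝ)/mR) = y ^ p * lam := by
          have hy1 : (y:ℝ) ^ (m+1) = y ^ ((mR + 1 : ℝ)) := by
            rw [← Real.rpow_natCast y (m+1)]
            congr 1
            push_cast [hmRdef]
            ring
          rw [hy1, Real.div_rpow (Real.rpow_nonneg h1.le _) hε1'.le,
            ← Real.rpow_mul h1.le,
            show (mR + 1) * ((1:ℝ)/mR) = p by rw [hpdef]; field_simp,
            hlameq, div_eq_mul_inv]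
        rw [hval]
        have hgy : g y = c * y ^ p := hgpos y h1
        have hle : ε + lam * g y ≤ 1 := by
          have : lam * g y ≤ lam * g Y :=
            mul_le_mul_of_nonneg_left (hgmono h2) hlampos.le
          rw [hgY] at this
          linarith
        rw [min_eq_left hle, hgy]
        ring
      · push_neg at h1 h2
        rw [hT] at h2
        have hge : 1 ≤ ε + lam * g y := by
          have : lam * g Y ≤ lam * g y :=
            mul_le_mul_of_nonneg_left (hgmono h2.le) hlampos.le
          rw [hgY] at this
          linarith
        rw [min_eq_right hge]
    -- now the pointwise bound
    rw [hu1min x, hueq (x + S ε)]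
    rw [abs_sub_le_iff]
    have hRHSnn : 0 ≤ ε + L * S ε := by
      have := mul_nonneg hLnn hSnn'
      linarith
    by_cases hx : x₀ ≤ x
    · -- both are 1
      have hu1x : min (g x) 1 = 1 := by
        rw [min_eq_right]
        calc (1:ℝ) = g x₀ := hgx₀.symm
          _ ≤ g x := hgmono hx
      have hgxS : 1 ≤ g (x + S ε) := by
        calc (1:ℝ) = g x₀ := hgx₀.symm
          _ ≤ g (x + S ε) := hgmono (by linarith)
      have hfε : min (ε + lam * g (x + S ε)) 1 = 1 := by
        rw [min_eq_right]
        nlinarith [mul_le_mul_of_nonneg_left hgxS hlampos.le, hlamge]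
      rw [hu1x, hfε]
      constructor <;> linarith
    · push_neg at hx
      have hgx1 : g x ≤ 1 := by
        calc g x ≤ g x₀ := hgmono hx.le
          _ = 1 := hgx₀
      have hu1x : min (g x) 1 = g x := min_eq_left hgx1
      rw [hu1x]
      have hdiff : g (x + S ε) - g x ≤ L * S ε := by
        have hab : max x 0 ≤ max (x + S ε) 0 := max_le_max (by linarith) le_rfl
        have hbM : max (x + S ε) 0 ≤ x₀ + 1 := by
          apply max_le (by linarith) (by linarith)
        have h := rpow_sub_rpow_le_aux hp1 (le_max_right x 0) hab hbM
        have hsub : max (x + S ε) 0 - max x 0 ≤ S ε := by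
          rcases le_or_gt (x + S ε) 0 with h' | h'
          · rw [max_eq_right h']
            have := le_max_right x 0
            linarith
          · rw [max_eq_left h'.le]
            have := le_max_left x 0
            linarith
        have hcoef : (0:ℝ) ≤ p * (x₀ + 1) ^ (p - 1) :=
          mul_nonneg hppos.le (Real.rpow_nonneg (by linarith) _)
        calc g (x + S ε) - g x
            = c * ((max (x + S ε) 0) ^ p - (max x 0) ^ p) := by rw [hgdef]; ring
          _ ≤ c * (p * (x₀ + 1) ^ (p - 1) * S ε) := by
              apply mul_le_mul_of_nonneg_left _ hc.le
              have h2 := mul_le_mul_of_nonneg_left hsub hcoef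
              linarith
          _ = L * S ε := by rw [hLdef]; ring
      constructor
      · -- g x - min ≤ ε + L S ε
        have t1 : lam * g x ≤ lam * g (x + S ε) :=
          mul_le_mul_of_nonneg_left (hgmono (by linarith)) hlampos.le
        have t2 : (1 - ε) * g x ≤ lam * g x :=
          mul_le_mul_of_nonneg_right hlamge (hgnonneg x)
        have h2 : g x - ε ≤ min (ε + lam * g (x + S ε)) 1 := by
          apply le_min
          · nlinarith [hgnonneg x]
          · linarith
        nlinarith [mul_nonneg hLnn hSnn']
      · -- min - g x ≤ ε + L S ε
        calc min (ε + lam * g (x + S ε)) 1 - g x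
            ≤ (ε + lam * g (x + S ε)) - g x := by
              have := min_le_left (ε + lam * g (x + S ε)) 1
              linarith
          _ ≤ ε + g (x + S ε) - g x := by
              nlinarith [hgnonneg (x + S ε), hlamle1]
          _ ≤ ε + L * S ε := by linarith
  -- S tends to 0
  have hStend : Filter.Tendsto S (nhdsWithin 0 (Set.Ioo 0 1)) (nhds 0) := by
    have hexp : (0:ℝ) < 1/(mR+1) := by positivity
    have h0 : Filter.Tendsto (fun ε : ℝ => ε ^ ((1:ℝ)/(mR+1))) (nhds 0) (nhds 0) := by
      have hcont := (Real.continuousAt_rpow_const 0 ((1:ℝ)/(mR+1)) (Or.inr hexp.le))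
      have := hcont.tendsto
      rwa [Real.zero_rpow (ne_of_gt hexp)] at this
    have h0' : Filter.Tendsto (fun ε : ℝ => x₀ * ε ^ ((1:ℝ)/(mR+1)))
        (nhdsWithin 0 (Set.Ioo 0 1)) (nhds 0) := by
      simpa using (h0.mono_left nhdsWithin_le_nhds).const_mul x₀
    have e1 : ∀ᶠ ε in nhdsWithin 0 (Set.Ioo 0 1), 0 ≤ S ε := by
      filter_upwards [self_mem_nhdsWithin] with ε hε
      exact hSnn ε hε.1 hε.2
    have e2 : ∀ᶠ ε in nhdsWithin 0 (Set.Ioo 0 1), S ε ≤ x₀ * ε ^ ((1:ℝ)/(mR+1)) := by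
      filter_upwards [self_mem_nhdsWithin] with ε hε
      have hε0 := hε.1
      have h1ε : (0:ℝ) < 1 - ε := by linarith [hε.2]
      have hfac : (1 - ε) ^ (mR/(mR+1)) ≤ 1 :=
        Real.rpow_le_one h1ε.le (by linarith) (by positivity)
      have hrw : S ε = (1 - ε) ^ (mR/(mR+1)) *
          ((mR + 1) * q ^ ((1:ℝ)/(mR+1)) * mR ^ (-(mR/(mR+1))) * ε ^ ((1:ℝ)/(mR+1))) := by
        rw [hS ε, neg_div]
        ring
      have hKnn : 0 ≤ (mR + 1) * q ^ ((1:ℝ)/(mR+1)) * mR ^ (-(mR/(mR+1))) * ε ^ ((1:ℝ)/(mR+1)) := by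
        positivity
      have hx₀rw : x₀ * ε ^ ((1:ℝ)/(mR+1)) =
          (mR + 1) * q ^ ((1:ℝ)/(mR+1)) * mR ^ (-(mR/(mR+1))) * ε ^ ((1:ℝ)/(mR+1)) := by
        rw [hx₀']
      rw [hrw, hx₀rw]
      exact mul_le_of_le_one_left hKnn hfac
    exact squeeze_zero' e1 e2 h0'
  have hδtend : Filter.Tendsto (fun ε => ε + L * S ε) (nhdsWithin 0 (Set.Ioo 0 1)) (nhds 0) := by
    have hid : Filter.Tendsto (fun ε : ℝ => ε) (nhdsWithin 0 (Set.Ioo 0 1)) (nhds 0) :=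
      (continuous_id.tendsto 0).mono_left nhdsWithin_le_nhds
    have h2 : Filter.Tendsto (fun ε => L * S ε) (nhdsWithin 0 (Set.Ioo 0 1)) (nhds 0) := by
      simpa using hStend.const_mul L
    simpa using hid.add h2
  rw [Metric.tendstoUniformly_iff]
  intro δ hδ
  have h1 : ∀ᶠ ε in nhdsWithin 0 (Set.Ioo 0 1), ε + L * S ε < δ :=
    hδtend.eventually (Filter.Tendsto.eventually_lt_const hδ Filter.tendsto_id)
  have h2 : ∀ᶠ ε in nhdsWithin 0 (Set.Ioo 0 1), S ε < 1 :=
    hStend.eventually (Filter.Tendsto.eventually_lt_const one_pos Filter.tendsto_id)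
  filter_upwards [h1, h2, self_mem_nhdsWithin] with ε hA hB hC x
  rw [Real.dist_eq]
  calc |u1 x - uε ε (x + S ε) (1 + ε)| ≤ ε + L * S ε := key ε hC.1 hC.2 hB.le x
    _ < δ := hA
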